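/- If A is a worm all of whose modalities are ≥ 1 and h_{⟨1⟩A}(n) is defined, then h_{⟨1⟩A}(n) > h_A^{(n)}(n), the n-fold iterate of h_A applied to n. -/

import Mathlib

/-- The `α`-head of a worm: maximal initial segment of modalities `≥ α`. -/
noncomputable def headW (α : Ordinal) : List Ordinal → List Ordinal
  | [] => []
  | β :: A => if β < α then [] else β :: headW α A

/-- The `α`-remainder of a worm: what is left after removing the `α`-head. -/
noncomputable def remW (α : Ordinal) : List Ordinal → List Ordinal
  | [] => []
  | β :: A => if β < α then β :: A else remW α A

open Classical in
/-- The step-down function on worms, relative to an assignment `fs` of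
fundamental sequences to limit ordinals:  `⊤⟦k⟧ = ⊤`, `(0A)⟦k⟧ = A`,
`(⟨α+1⟩B)⟦k⟧ = (⟨α⟩h_{α+1}(B))^{k+1} r_{α+1}(B)` and `(⟨λ⟩B)⟦k⟧ = ⟨λ[k]⟩B`. -/
noncomputable def stepDown (fs : Ordinal → ℕ → Ordinal) : List Ordinal → ℕ → List Ordinal
  | [], _ => []
  | α :: B, k =>
    if α = 0 then B
    else if Order.IsSuccLimit α then fs α k :: B
    else (List.replicate (k + 1) (Ordinal.pred α :: headW α B)).flatten ++ remW α B

/-- `iterStep fs A m k = A⟦m⟧⟦m+1⟧⋯⟦m+k⟧`. -/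
noncomputable def iterStep (fs : Ordinal → ℕ → Ordinal) (A : List Ordinal) (m : ℕ) : ℕ → List Ordinal
  | 0 => stepDown fs A m
  | k + 1 => stepDown fs (iterStep fs A m k) (m + k + 1)

/-- `h_A(m)` is defined, i.e. some `A⟦m⟧⟦m+1⟧⋯⟦m+k⟧` equals `⊤`. -/
def Dies (fs : Ordinal → ℕ → Ordinal) (A : List Ordinal) (m : ℕ) : Prop :=
  ∃ k, iterStep fs A m k = []

/-- The worm-Hardy function: `h_A(m)` is the least `k` with
`A⟦m⟧⟦m+1⟧⋯⟦m+k⟧ = ⊤`. -/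
noncomputable def hW (fs : Ordinal → ℕ → Ordinal) (A : List Ordinal) (m : ℕ) : ℕ :=
  sInf {k | iterStep fs A m k = []}


namespace WormAux

open Ordinal List

variable (fs : Ordinal → ℕ → Ordinal)

/-! ### headW / remW basics -/

@[simp] lemma headW_nil (α : Ordinal) : headW α [] = [] := rfl
lemma headW_cons (α β : Ordinal) (A : List Ordinal) :
    headW α (β :: A) = if β < α then [] else β :: headW α A := rfl
@[simp] lemma remW_nil (α : Ordinal) : remW α [] = [] := rfl
lemma remW_cons (α β : Ordinal) (A : List Ordinal) :
    remW α (β :: A) = if β < α then β :: A else remW α A := rfl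

lemma headW_append_remW (α : Ordinal) : ∀ B, headW α B ++ remW α B = B
  | [] => rfl
  | β :: B => by
      by_cases h : β < α <;> simp [headW_cons, remW_cons, h, headW_append_remW α B]

lemma mem_of_mem_headW {α γ : Ordinal} {B : List Ordinal} (h : γ ∈ headW α B) : γ ∈ B := by
  rw [← headW_append_remW α B]; exact List.mem_append_left _ h

lemma mem_of_mem_remW {α γ : Ordinal} {B : List Ordinal} (h : γ ∈ remW α B) : γ ∈ B := by
  rw [← headW_append_remW α B]; exact List.mem_append_right _ h

lemma headW_of_forall {α : Ordinal} : ∀ {B : List Ordinal}, (∀ γ ∈ B, ¬ γ < α) → headW α B = B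
  | [], _ => rfl
  | β :: B, h => by
      rw [headW_cons, if_neg (h β (by simp))]
      exact congrArg _ (headW_of_forall fun γ hγ => h γ (by simp [hγ]))

lemma remW_of_forall {α : Ordinal} : ∀ {B : List Ordinal}, (∀ γ ∈ B, ¬ γ < α) → remW α B = []
  | [], _ => rfl
  | β :: B, h => by
      rw [remW_cons, if_neg (h β (by simp))]
      exact remW_of_forall fun γ hγ => h γ (by simp [hγ])

/-! ### stepDown basics -/

@[simp] lemma stepDown_nil (k : ℕ) : stepDown fs [] k = [] := rfl

lemma stepDown_zero_cons (B : List Ordinal) (k : ℕ) : stepDown fs ((0:Ordinal) :: B) k = B := by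
  simp [stepDown]

lemma stepDown_limit_cons {α : Ordinal} (h : Order.IsSuccLimit α) (B : List Ordinal) (k : ℕ) :
    stepDown fs (α :: B) k = fs α k :: B := by
  simp [stepDown, h, h.pos.ne']

lemma stepDown_succ_cons {α : Ordinal} (h0 : α ≠ 0) (hl : ¬ Order.IsSuccLimit α) (B : List Ordinal) (k : ℕ) :
    stepDown fs (α :: B) k
      = (List.replicate (k + 1) (Ordinal.pred α :: headW α B)).flatten ++ remW α B := by
  simp [stepDown, h0, hl]

lemma flat_rep_succ {X : List Ordinal} {n : ℕ} :
    (List.replicate (n+1) X).flatten = X ++ (List.replicate n X).flatten := by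
  simp [List.replicate_succ]

lemma flat_rep_succ' {X : List Ordinal} {n : ℕ} :
    (List.replicate (n+1) X).flatten = (List.replicate n X).flatten ++ X := by
  rw [List.replicate_succ']; simp

lemma flat_rep_add {X : List Ordinal} {a b : ℕ} :
    (List.replicate (a+b) X).flatten
      = (List.replicate a X).flatten ++ (List.replicate b X).flatten := by
  induction a with
  | zero => simp
  | succ k ih =>
      rw [show k+1+b = (k+b)+1 by omega, flat_rep_succ, flat_rep_succ, ih, List.append_assoc]

lemma flat_rep_length {X : List Ordinal} {n : ℕ} :
    ((List.replicate n X).flatten).length = n * X.length := by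
  induction n with
  | zero => simp
  | succ k ih => rw [flat_rep_succ]; simp [ih, Nat.succ_mul]; ring

lemma stepDown_eq_nil {A : List Ordinal} {k : ℕ} (h : stepDown fs A k = []) :
    A = [] ∨ A = [(0:Ordinal)] := by
  match A with
  | [] => exact Or.inl rfl
  | α :: B =>
    rcases Ordinal.zero_or_succ_or_isSuccLimit α with rfl | ⟨a, rfl⟩ | hl
    · rw [stepDown_zero_cons] at h; exact Or.inr (by rw [h])
    · rw [stepDown_succ_cons fs (Ordinal.succ_ne_zero a) (Order.not_isSuccLimit_succ a)] at h
      rw [flat_rep_succ] at h; simp at h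
    · rw [stepDown_limit_cons fs hl] at h; simp at h

lemma stepDown_nil_any {A : List Ordinal} {k k' : ℕ} (h : stepDown fs A k = []) :
    stepDown fs A k' = [] := by
  rcases stepDown_eq_nil fs h with rfl | rfl
  · rfl
  · exact stepDown_zero_cons fs [] k'

/-! ### iterStep / Dies / hW basics -/

lemma iter_one (A : List Ordinal) (m : ℕ) :
    ∀ j, iterStep fs A m (j+1) = iterStep fs (stepDown fs A m) (m+1) j
  | 0 => rfl
  | j+1 => by
      show stepDown fs (iterStep fs A m (j+1)) (m+(j+1)+1) = _
      rw [iter_one A m j, show m+(j+1)+1 = (m+1)+j+1 by omega]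
      rfl

lemma iter_shift (A : List Ordinal) (m s : ℕ) :
    ∀ j, iterStep fs A m (s+1+j) = iterStep fs (iterStep fs A m s) (m+s+1) j
  | 0 => rfl
  | j+1 => by
      show stepDown fs (iterStep fs A m (s+1+j)) (m+(s+1+j)+1) = _
      rw [iter_shift A m s j, show m+(s+1+j)+1 = (m+s+1)+j+1 by omega]
      rfl

lemma dies_step {A : List Ordinal} {m : ℕ} :
    Dies fs A m ↔ Dies fs (stepDown fs A m) (m+1) := by
  constructor
  · rintro ⟨k, hk⟩
    cases k with
    | zero =>
        have h0 : stepDown fs A m = [] := hk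
        exact ⟨0, by rw [h0]; rfl⟩
    | succ j => rw [iter_one fs A m j] at hk; exact ⟨j, hk⟩
  · rintro ⟨j, hj⟩
    exact ⟨j+1, by rw [iter_one fs A m j]; exact hj⟩

lemma dies_nil (m : ℕ) : Dies fs ([] : List Ordinal) m := ⟨0, rfl⟩

lemma hW_nil (m : ℕ) : hW fs [] m = 0 := Nat.sInf_eq_zero.2 (Or.inl rfl)

lemma hW_eq_zero {A : List Ordinal} {m : ℕ} (h : stepDown fs A m = []) : hW fs A m = 0 :=
  Nat.sInf_eq_zero.2 (Or.inl h)

lemma iter_hW_eq_nil {A : List Ordinal} {m : ℕ} (hd : Dies fs A m) :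
    iterStep fs A m (hW fs A m) = [] :=
  Nat.sInf_mem hd

lemma iter_lt_hW_ne_nil {A : List Ordinal} {m k : ℕ} (hk : k < hW fs A m) :
    iterStep fs A m k ≠ [] :=
  Nat.notMem_of_lt_sInf hk

lemma hW_pos {A : List Ordinal} {m : ℕ} (hd : Dies fs A m) (hne : stepDown fs A m ≠ []) :
    0 < hW fs A m := by
  rcases Nat.eq_zero_or_pos (hW fs A m) with h0 | h
  · exfalso
    have := iter_hW_eq_nil fs hd
    rw [h0] at this
    exact hne this
  · exact h

lemma hW_step {A : List Ordinal} {m : ℕ} (hne : stepDown fs A m ≠ []) (hd : Dies fs A m) :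
    hW fs A m = hW fs (stepDown fs A m) (m+1) + 1 := by
  have hd' : Dies fs (stepDown fs A m) (m+1) := (dies_step fs).1 hd
  apply _root_.le_antisymm
  · apply Nat.sInf_le
    show iterStep fs A m (hW fs (stepDown fs A m) (m+1) + 1) = []
    rw [iter_one fs A m]
    exact iter_hW_eq_nil fs hd'
  · have hmem : iterStep fs A m (hW fs A m) = [] := iter_hW_eq_nil fs hd
    have hpos : hW fs A m ≠ 0 := by
      intro h0; rw [h0] at hmem; exact hne hmem
    rcases Nat.exists_eq_succ_of_ne_zero hpos with ⟨j, hj⟩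
    rw [hj, iter_one fs A m] at hmem
    have : hW fs (stepDown fs A m) (m+1) ≤ j := Nat.sInf_le hmem
    omega

/-! ### length bounds -/

lemma stepDown_length (A : List Ordinal) (k : ℕ) :
    A.length ≤ (stepDown fs A k).length + 1 := by
  match A with
  | [] => simp
  | α :: B =>
    rcases Ordinal.zero_or_succ_or_isSuccLimit α with rfl | ⟨a, rfl⟩ | hl
    · rw [stepDown_zero_cons]; simp
    · rw [stepDown_succ_cons fs (Ordinal.succ_ne_zero a) (Order.not_isSuccLimit_succ a),
        flat_rep_succ]
      have hlen : (headW (Order.succ a) B).length + (remW (Order.succ a) B).length = B.length := by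
        rw [← List.length_append, headW_append_remW]
      simp only [List.length_append, List.length_cons]
      omega
    · rw [stepDown_limit_cons fs hl]; simp

lemma iter_len : ∀ (k : ℕ) (A : List Ordinal) (m : ℕ), iterStep fs A m k = [] → A.length ≤ k + 1
  | 0, A, m, h => by
      have h2 := stepDown_length fs A m
      have h0 : stepDown fs A m = [] := h
      rw [h0] at h2; simpa using h2
  | k+1, A, m, h => by
      rw [iter_one fs A m] at h
      have h1 := iter_len k _ _ h
      have h2 := stepDown_length fs A m
      omega

lemma len_le_hW {A : List Ordinal} {m : ℕ} (hd : Dies fs A m) :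
    A.length ≤ hW fs A m + 1 :=
  iter_len fs _ A m (iter_hW_eq_nil fs hd)

/-! ### ordinal facts -/

lemma omega2_eq : Ordinal.omega0 * 2 = Ordinal.omega0 + Ordinal.omega0 := by
  rw [show (2:Ordinal) = 1 + 1 by norm_num, mul_add, mul_one]

lemma limit_lt_omega2 {δ : Ordinal} (h1 : Order.IsSuccLimit δ) (h2 : δ < Ordinal.omega0 * 2) :
    δ = Ordinal.omega0 := by
  have hω : Ordinal.omega0 ≤ δ := Ordinal.omega0_le_of_isSuccLimit h1
  have hsub := Ordinal.add_sub_cancel_of_le hω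
  have h2' : Ordinal.omega0 + (δ - Ordinal.omega0) < Ordinal.omega0 + Ordinal.omega0 := by
    rw [hsub, ← omega2_eq]; exact h2
  have hlt : δ - Ordinal.omega0 < Ordinal.omega0 := lt_of_add_lt_add_left h2'
  obtain ⟨n, hn⟩ := Ordinal.lt_omega0.1 hlt
  match n, hn with
  | 0, hn => rw [← hsub, hn]; simp
  | m+1, hn =>
    exfalso
    have : δ = Order.succ (Ordinal.omega0 + m) := by
      rw [← hsub, hn, Nat.cast_succ, ← add_assoc, Ordinal.add_one_eq_succ]
    exact Order.not_isSuccLimit_succ _ (this ▸ h1)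

lemma omega0_lt_omega2 : Ordinal.omega0 < Ordinal.omega0 * 2 := by
  rw [omega2_eq]
  simpa using (add_lt_add_iff_left Ordinal.omega0).2 Ordinal.omega0_pos

lemma stepDown_entries (hfs : ∀ k, fs Ordinal.omega0 k = (k : Ordinal)) {A : List Ordinal}
    (hA : ∀ γ ∈ A, γ < Ordinal.omega0 * 2) (k : ℕ) :
    ∀ γ ∈ stepDown fs A k, γ < Ordinal.omega0 * 2 := by
  intro γ hγ
  match A with
  | [] => simp at hγ
  | α :: B =>
    have hα := hA α (by simp)
    have hB : ∀ γ ∈ B, γ < Ordinal.omega0 * 2 := fun γ h => hA γ (by simp [h])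
    rcases Ordinal.zero_or_succ_or_isSuccLimit α with rfl | ⟨a, rfl⟩ | hl
    · rw [stepDown_zero_cons] at hγ; exact hB γ hγ
    · rw [stepDown_succ_cons fs (Ordinal.succ_ne_zero a) (Order.not_isSuccLimit_succ a)] at hγ
      rcases List.mem_append.1 hγ with h | h
      · obtain ⟨l, hlmem, hmem⟩ := List.mem_flatten.1 h
        rw [List.eq_of_mem_replicate hlmem] at hmem
        rcases List.mem_cons.1 hmem with rfl | h
        · calc Ordinal.pred (Order.succ a) ≤ Order.succ a := Ordinal.pred_le_self _
            _ < Ordinal.omega0 * 2 := hα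
        · exact hB γ (mem_of_mem_headW h)
      · exact hB γ (mem_of_mem_remW h)
    · rw [stepDown_limit_cons fs hl] at hγ
      rcases List.mem_cons.1 hγ with rfl | h
      · rw [limit_lt_omega2 hl hα, hfs]
        exact lt_trans (Ordinal.nat_lt_omega0 k) omega0_lt_omega2
      · exact hB γ h

/-! ### the simulation relation -/

def Rrel (C D : List Ordinal) : Prop :=
  C = [] ∨ ∃ c T P d, C = c :: T ∧ D = P ++ d :: T ∧ c ≤ d ∧ (c = d ∨ d < Ordinal.omega0)

lemma Rrel_refl (C : List Ordinal) : Rrel C C := by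
  cases C with
  | nil => exact Or.inl rfl
  | cons c T => exact Or.inr ⟨c, T, [], c, rfl, rfl, le_rfl, Or.inl rfl⟩

lemma rem_or_head_suffix (β d : Ordinal) (T : List Ordinal) :
    ∀ P' : List Ordinal, (∃ S, remW β (P' ++ d :: T) = S ++ d :: T) ∨
      (∃ H', headW β (P' ++ d :: T) = H' ++ d :: headW β T ∧
        remW β (P' ++ d :: T) = remW β T)
  | [] => by
      by_cases hd : d < β
      · exact Or.inl ⟨[], by simp [remW_cons, hd]⟩
      · exact Or.inr ⟨[], by simp [headW_cons, remW_cons, hd]⟩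
  | p :: P' => by
      by_cases hp : p < β
      · exact Or.inl ⟨p :: P', by simp [remW_cons, hp]⟩
      · rcases rem_or_head_suffix β d T P' with ⟨S, hS⟩ | ⟨H', h1, h2⟩
        · exact Or.inl ⟨S, by simp [remW_cons, hp, hS]⟩
        · exact Or.inr ⟨p :: H', by simp [headW_cons, hp, h1], by simp [remW_cons, hp, h2]⟩

lemma stepDown_succ_suffix {β : Ordinal} (h0 : β ≠ 0) (hl : ¬ Order.IsSuccLimit β)
    (P' : List Ordinal) (d : Ordinal) (T : List Ordinal) (k : ℕ) :
    ∃ J, stepDown fs (β :: (P' ++ d :: T)) k = J ++ d :: T := by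
  rw [stepDown_succ_cons fs h0 hl]
  rcases rem_or_head_suffix β d T P' with ⟨S, hS⟩ | ⟨H', h1, h2⟩
  · exact ⟨(List.replicate (k+1) (Ordinal.pred β :: headW β (P' ++ d :: T))).flatten ++ S,
      by rw [hS, List.append_assoc]⟩
  · refine ⟨(List.replicate k (Ordinal.pred β :: headW β (P' ++ d :: T))).flatten
      ++ (Ordinal.pred β :: H'), ?_⟩
    rw [flat_rep_succ', h2]
    have : (Ordinal.pred β :: headW β (P' ++ d :: T)) ++ remW β T = Ordinal.pred β :: H' ++ d :: T := by
      rw [h1]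
      simp [List.append_assoc, headW_append_remW]
    rw [List.append_assoc, this]
    simp

lemma step_aligned (hfs : ∀ k, fs Ordinal.omega0 k = (k : Ordinal)) {c : Ordinal}
    (hc : c < Ordinal.omega0 * 2) (T : List Ordinal) {t t' : ℕ} (ht : t ≤ t') :
    Rrel (stepDown fs (c :: T) t) (stepDown fs (c :: T) t') := by
  rcases Ordinal.zero_or_succ_or_isSuccLimit c with rfl | ⟨a, rfl⟩ | hl
  · rw [stepDown_zero_cons, stepDown_zero_cons]; exact Rrel_refl T
  · rw [stepDown_succ_cons fs (Ordinal.succ_ne_zero a) (Order.not_isSuccLimit_succ a),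
      stepDown_succ_cons fs (Ordinal.succ_ne_zero a) (Order.not_isSuccLimit_succ a),
      Ordinal.pred_succ]
    right
    refine ⟨a, headW (Order.succ a) T ++
        ((List.replicate t (a :: headW (Order.succ a) T)).flatten ++ remW (Order.succ a) T),
      (List.replicate (t'-t) (a :: headW (Order.succ a) T)).flatten, a, ?_, ?_, le_rfl, Or.inl rfl⟩
    · rw [flat_rep_succ]; simp [List.append_assoc]
    · rw [show t'+1 = (t'-t) + (t+1) by omega, flat_rep_add, flat_rep_succ]
      simp [List.append_assoc]
  · have hcω : c = Ordinal.omega0 := limit_lt_omega2 hl hc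
    subst hcω
    rw [stepDown_limit_cons fs hl, stepDown_limit_cons fs hl, hfs t, hfs t']
    exact Or.inr ⟨_, T, [], _, rfl, rfl, Nat.cast_le.2 ht,
      Or.inr (Ordinal.nat_lt_omega0 t')⟩

/-! ### master lemma -/

lemma master (hfs : ∀ k, fs Ordinal.omega0 k = (k : Ordinal)) :
    ∀ N C D (t t' : ℕ), t ≤ t' → Dies fs D t' → hW fs D t' ≤ N →
      (∀ γ ∈ D, γ < Ordinal.omega0 * 2) → Rrel C D →
      Dies fs C t ∧ hW fs C t ≤ hW fs D t' := by
  intro N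
  induction N using Nat.strong_induction_on with
  | _ N IH =>
  intro C D t t' htt hdD hN hD hR
  rcases hR with rfl | ⟨c, T, P, d, rfl, rfl, hcd, hslack⟩
  · exact ⟨dies_nil fs t, by rw [hW_nil]; omega⟩
  by_cases hPa : P = [] ∧ c = d
  · -- aligned case : C = D
    obtain ⟨rfl, rfl⟩ := hPa
    simp only [List.nil_append] at hdD hN hD ⊢
    by_cases hsd : stepDown fs (c :: T) t' = []
    · have hsdt : stepDown fs (c :: T) t = [] := stepDown_nil_any fs hsd
      exact ⟨⟨0, hsdt⟩, by rw [hW_eq_zero fs hsdt]; omega⟩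
    · have hsdt : stepDown fs (c :: T) t ≠ [] := fun h => hsd (stepDown_nil_any fs h)
      have hc2 : c < Ordinal.omega0 * 2 := hD c (by simp)
      have hstep : Rrel (stepDown fs (c :: T) t) (stepDown fs (c :: T) t') :=
        step_aligned fs hfs hc2 T htt
      have hdD' : Dies fs (stepDown fs (c :: T) t') (t'+1) := (dies_step fs).1 hdD
      have heq : hW fs (c :: T) t' = hW fs (stepDown fs (c :: T) t') (t'+1) + 1 :=
        hW_step fs hsd hdD
      have hlt : hW fs (stepDown fs (c :: T) t') (t'+1) < N := by omega
      obtain ⟨hdC', hle⟩ := IH _ hlt (stepDown fs (c :: T) t) (stepDown fs (c :: T) t')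
        (t+1) (t'+1) (by omega) hdD' le_rfl (stepDown_entries fs hfs hD t') hstep
      have hdC : Dies fs (c :: T) t := (dies_step fs).2 hdC'
      exact ⟨hdC, by rw [hW_step fs hsdt hdC, heq]; omega⟩
  · -- skip case : unfold D once
    have hsuf : ∃ J d', stepDown fs (P ++ d :: T) t' = J ++ d' :: T ∧ c ≤ d' ∧
        (c = d' ∨ d' < Ordinal.omega0) := by
      match P with
      | [] =>
        have hne : c ≠ d := fun h => hPa ⟨rfl, h⟩
        have hdo : d < Ordinal.omega0 := hslack.resolve_left hne
        obtain ⟨nd, rfl⟩ := Ordinal.lt_omega0.1 hdo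
        have hlt : c < (nd : Ordinal) := lt_of_le_of_ne hcd hne
        match nd with
        | 0 => exact absurd hlt (by simp)
        | m+1 =>
          have hd' : ((m+1 : ℕ) : Ordinal) = Order.succ (m : Ordinal) := by
            rw [Nat.cast_succ, Ordinal.add_one_eq_succ]
          rw [List.nil_append, hd',
            stepDown_succ_cons fs (Ordinal.succ_ne_zero _) (Order.not_isSuccLimit_succ _),
            Ordinal.pred_succ]
          refine ⟨(List.replicate t' ((m : Ordinal) :: headW (Order.succ (m:Ordinal)) T)).flatten,
            (m : Ordinal), ?_, ?_, Or.inr (Ordinal.nat_lt_omega0 m)⟩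
          · rw [flat_rep_succ']
            simp [List.append_assoc, headW_append_remW]
          · have := hd' ▸ hlt
            exact Order.lt_succ_iff.1 this
      | β :: P' =>
        rcases Ordinal.zero_or_succ_or_isSuccLimit β with rfl | ⟨a, rfl⟩ | hlim
        · rw [List.cons_append, stepDown_zero_cons]
          exact ⟨P', d, rfl, hcd, hslack⟩
        · obtain ⟨J, hJ⟩ := stepDown_succ_suffix fs (Ordinal.succ_ne_zero a)
            (Order.not_isSuccLimit_succ a) P' d T t'
          exact ⟨J, d, by rw [List.cons_append]; exact hJ, hcd, hslack⟩
        · rw [List.cons_append, stepDown_limit_cons fs hlim]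
          exact ⟨fs β t' :: P', d, rfl, hcd, hslack⟩
    obtain ⟨J, d', hJ, hcd', hslack'⟩ := hsuf
    have hsd_ne : stepDown fs (P ++ d :: T) t' ≠ [] := by rw [hJ]; simp
    have hdD' : Dies fs (stepDown fs (P ++ d :: T) t') (t'+1) := (dies_step fs).1 hdD
    have heq := hW_step fs hsd_ne hdD
    have hlt : hW fs (stepDown fs (P ++ d :: T) t') (t'+1) < N := by omega
    obtain ⟨hdC, hle⟩ := IH _ hlt (c :: T) (stepDown fs (P ++ d :: T) t') t (t'+1)
      (by omega) hdD' le_rfl (stepDown_entries fs hfs hD t')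
      (Or.inr ⟨c, T, J, d', rfl, hJ, hcd', hslack'⟩)
    exact ⟨hdC, by omega⟩

lemma hW_mono (hfs : ∀ k, fs Ordinal.omega0 k = (k : Ordinal)) {A : List Ordinal} {m m' : ℕ}
    (hA : ∀ γ ∈ A, γ < Ordinal.omega0 * 2) (hd : Dies fs A m') (h : m ≤ m') :
    Dies fs A m ∧ hW fs A m ≤ hW fs A m' :=
  master fs hfs (hW fs A m') A A m m' h hd le_rfl hA (Rrel_refl A)

/-! ### concatenation -/

lemma headW_append_zero {α : Ordinal} (h : α ≠ 0) (V : List Ordinal) :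
    ∀ B : List Ordinal, headW α (B ++ (0:Ordinal) :: V) = headW α B
  | [] => by
      rw [List.nil_append, headW_cons, if_pos (pos_iff_ne_zero.2 h)]; rfl
  | β :: B => by
      by_cases hb : β < α <;>
        simp [headW_cons, hb, headW_append_zero h V B]

lemma remW_append_zero {α : Ordinal} (h : α ≠ 0) (V : List Ordinal) :
    ∀ B : List Ordinal, remW α (B ++ (0:Ordinal) :: V) = remW α B ++ (0:Ordinal) :: V
  | [] => by
      rw [List.nil_append, remW_cons, if_pos (pos_iff_ne_zero.2 h)]; rfl
  | β :: B => by
      by_cases hb : β < α <;>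
        simp [remW_cons, hb, remW_append_zero h V B]

lemma stepDown_cat {W : List Ordinal} (hWne : W ≠ []) (V : List Ordinal) (k : ℕ) :
    stepDown fs (W ++ (0:Ordinal) :: V) k = stepDown fs W k ++ (0:Ordinal) :: V := by
  match W with
  | [] => exact absurd rfl hWne
  | α :: W₁ =>
    rw [List.cons_append]
    rcases Ordinal.zero_or_succ_or_isSuccLimit α with rfl | ⟨a, rfl⟩ | hl
    · rw [stepDown_zero_cons, stepDown_zero_cons]
    · rw [stepDown_succ_cons fs (Ordinal.succ_ne_zero a) (Order.not_isSuccLimit_succ a),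
        stepDown_succ_cons fs (Ordinal.succ_ne_zero a) (Order.not_isSuccLimit_succ a),
        headW_append_zero (Ordinal.succ_ne_zero a) V W₁,
        remW_append_zero (Ordinal.succ_ne_zero a) V W₁, List.append_assoc]
    · rw [stepDown_limit_cons fs hl, stepDown_limit_cons fs hl, List.cons_append]

lemma iter_cat {W : List Ordinal} (hWne : W ≠ []) (V : List Ordinal) (m : ℕ) :
    ∀ k : ℕ, (∀ i, i < k → iterStep fs W m i ≠ []) →
      iterStep fs (W ++ (0:Ordinal) :: V) m k = iterStep fs W m k ++ (0:Ordinal) :: V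
  | 0, _ => stepDown_cat fs hWne V m
  | k+1, hk => by
      have ih := iter_cat hWne V m k (fun i hi => hk i (by omega))
      show stepDown fs (iterStep fs (W ++ (0:Ordinal) :: V) m k) (m+k+1) = _
      rw [ih]
      exact stepDown_cat fs (hk k (by omega)) V (m+k+1)

lemma dies_cat_left {W V : List Ordinal} {m : ℕ} (hWne : W ≠ [])
    (hd : Dies fs (W ++ (0:Ordinal) :: V) m) : Dies fs W m := by
  by_contra hnd
  obtain ⟨k, hk⟩ := hd
  have hall : ∀ i, iterStep fs W m i ≠ [] := fun i hi => hnd ⟨i, hi⟩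
  rw [iter_cat fs hWne V m k (fun i _ => hall i)] at hk
  simp at hk

lemma cat_decomp {W V : List Ordinal} {m : ℕ} (hWne : W ≠ []) (hVne : V ≠ [])
    (hd : Dies fs (W ++ (0:Ordinal) :: V) m) :
    Dies fs W m ∧ Dies fs V (m + hW fs W m + 2) ∧
      hW fs (W ++ (0:Ordinal) :: V) m = hW fs W m + 2 + hW fs V (m + hW fs W m + 2) := by
  have hdW := dies_cat_left fs hWne hd
  have e1 : iterStep fs (W ++ (0:Ordinal) :: V) m (hW fs W m) = (0:Ordinal) :: V := by
    rw [iter_cat fs hWne V m (hW fs W m) (fun i hi => iter_lt_hW_ne_nil fs hi),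
      iter_hW_eq_nil fs hdW, List.nil_append]
  have e2 : iterStep fs (W ++ (0:Ordinal) :: V) m (hW fs W m + 1) = V := by
    show stepDown fs (iterStep fs (W ++ (0:Ordinal) :: V) m (hW fs W m)) (m + hW fs W m + 1) = V
    rw [e1, stepDown_zero_cons]
  have e3 : ∀ j, iterStep fs (W ++ (0:Ordinal) :: V) m (hW fs W m + 2 + j)
      = iterStep fs V (m + hW fs W m + 2) j := by
    intro j
    have hsh := iter_shift fs (W ++ (0:Ordinal) :: V) m (hW fs W m + 1) j
    rw [e2, show m + (hW fs W m + 1) + 1 = m + hW fs W m + 2 by omega] at hsh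
    rw [show hW fs W m + 2 + j = hW fs W m + 1 + 1 + j by omega]
    exact hsh
  have hne_lt : ∀ k, k < hW fs W m + 2 → iterStep fs (W ++ (0:Ordinal) :: V) m k ≠ [] := by
    intro k hk
    rcases lt_trichotomy k (hW fs W m) with h | rfl | h
    · rw [iter_cat fs hWne V m k (fun i hi => iter_lt_hW_ne_nil fs (lt_trans hi h))]
      simp
    · rw [e1]; simp
    · have hk1 : k = hW fs W m + 1 := by omega
      rw [hk1, e2]; exact hVne
  have hdV : Dies fs V (m + hW fs W m + 2) := by
    obtain ⟨k, hk⟩ := hd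
    have hge : ¬ k < hW fs W m + 2 := fun hlt => hne_lt k hlt hk
    refine ⟨k - (hW fs W m + 2), ?_⟩
    rw [← e3, show hW fs W m + 2 + (k - (hW fs W m + 2)) = k by omega]
    exact hk
  refine ⟨hdW, hdV, ?_⟩
  apply _root_.le_antisymm
  · apply Nat.sInf_le
    show iterStep fs (W ++ (0:Ordinal) :: V) m (hW fs W m + 2 + hW fs V (m + hW fs W m + 2)) = []
    rw [e3]
    exact iter_hW_eq_nil fs hdV
  · have hK : iterStep fs (W ++ (0:Ordinal) :: V) m (hW fs (W ++ (0:Ordinal) :: V) m) = [] :=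
      iter_hW_eq_nil fs hd
    have hge : ¬ hW fs (W ++ (0:Ordinal) :: V) m < hW fs W m + 2 :=
      fun hlt => hne_lt _ hlt hK
    rw [show hW fs (W ++ (0:Ordinal) :: V) m
        = hW fs W m + 2 + (hW fs (W ++ (0:Ordinal) :: V) m - (hW fs W m + 2)) by omega,
      e3] at hK
    have h2 : hW fs V (m + hW fs W m + 2)
        ≤ hW fs (W ++ (0:Ordinal) :: V) m - (hW fs W m + 2) := Nat.sInf_le hK
    omega

/-! ### growth -/

lemma hW_gt (hfs : ∀ k, fs Ordinal.omega0 k = (k : Ordinal)) {A : List Ordinal} {m : ℕ}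
    (hne : A ≠ []) (hA : ∀ γ ∈ A, 1 ≤ γ ∧ γ < Ordinal.omega0 * 2) (hd : Dies fs A m) :
    m < hW fs A m := by
  match A with
  | [] => exact absurd rfl hne
  | c :: T =>
    have hc1 : 1 ≤ c := (hA c (by simp)).1
    rcases Ordinal.zero_or_succ_or_isSuccLimit c with rfl | ⟨a, rfl⟩ | hl
    · exact absurd hc1 (by simp)
    · have hsd := stepDown_succ_cons fs (Ordinal.succ_ne_zero a)
        (Order.not_isSuccLimit_succ a) T m
      have hlen : m + 1 ≤ (stepDown fs (Order.succ a :: T) m).length := by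
        rw [hsd, List.length_append, flat_rep_length]
        have h1 : 0 < (Ordinal.pred (Order.succ a) :: headW (Order.succ a) T).length := by simp
        have := Nat.le_mul_of_pos_right (m+1) h1
        omega
      have hne' : stepDown fs (Order.succ a :: T) m ≠ [] := by
        intro h0; rw [h0] at hlen; simp at hlen
      have h1 := hW_step fs hne' hd
      have h2 := len_le_hW fs ((dies_step fs).1 hd)
      omega
    · have hcw : c = Ordinal.omega0 := limit_lt_omega2 hl (hA c (by simp)).2
      have hsd : stepDown fs (c :: T) m = ((m : ℕ) : Ordinal) :: T := by
        rw [stepDown_limit_cons fs hl, hcw, hfs]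
      match m with
      | 0 => exact hW_pos fs hd (by rw [hsd]; simp)
      | k+1 =>
        have hd1 : Dies fs (((k+1 : ℕ) : Ordinal) :: T) (k+2) := by
          have := (dies_step fs).1 hd
          rwa [hsd] at this
        have hcast : ((k+1 : ℕ) : Ordinal) = Order.succ (k : Ordinal) := by
          rw [Nat.cast_succ, Ordinal.add_one_eq_succ]
        have hsd2 := stepDown_succ_cons fs (hcast ▸ Ordinal.succ_ne_zero (k : Ordinal))
          (hcast ▸ Order.not_isSuccLimit_succ (k : Ordinal)) T (k+2)
        have hlen : k + 3 ≤ (stepDown fs (((k+1 : ℕ) : Ordinal) :: T) (k+2)).length := by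
          rw [hsd2, List.length_append, flat_rep_length]
          have h1 : 0 < (Ordinal.pred ((k+1 : ℕ) : Ordinal)
              :: headW ((k+1 : ℕ) : Ordinal) T).length := by simp
          have := Nat.le_mul_of_pos_right (k+2+1) h1
          omega
        have hne2 : stepDown fs (((k+1 : ℕ) : Ordinal) :: T) (k+2) ≠ [] := by
          intro h0; rw [h0] at hlen; simp at hlen
        have e1 : hW fs (c :: T) (k+1) = hW fs (((k+1 : ℕ) : Ordinal) :: T) (k+2) + 1 := by
          have := hW_step fs (by rw [hsd]; simp) hd
          rwa [hsd] at this
        have e2 := hW_step fs hne2 hd1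
        have e3 := len_le_hW fs ((dies_step fs).1 hd1)
        omega

/-! ### the main induction -/

lemma claim (hfs : ∀ k, fs Ordinal.omega0 k = (k : Ordinal)) {A : List Ordinal}
    (hne : A ≠ []) (hA : ∀ γ ∈ A, 1 ≤ γ ∧ γ < Ordinal.omega0 * 2) :
    ∀ (j m x : ℕ), Dies fs (A ++ (List.replicate j ((0:Ordinal) :: A)).flatten) m → x ≤ m →
      (fun y => hW fs A y)^[j] x ≤ hW fs (A ++ (List.replicate j ((0:Ordinal) :: A)).flatten) m := by
  intro j
  induction j with
  | zero =>
      intro m x hd hxm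
      simp only [List.replicate, List.flatten_nil, List.append_nil] at hd ⊢
      simpa using le_of_lt (lt_of_le_of_lt hxm (hW_gt fs hfs hne hA hd))
  | succ j IHj =>
      intro m x hd hxm
      have hTj : A ++ (List.replicate (j+1) ((0:Ordinal) :: A)).flatten
          = A ++ (0:Ordinal) :: (A ++ (List.replicate j ((0:Ordinal) :: A)).flatten) := by
        rw [flat_rep_succ]; simp
      rw [hTj] at hd ⊢
      have hVne : A ++ (List.replicate j ((0:Ordinal) :: A)).flatten ≠ [] := by
        intro h0
        rw [List.append_eq_nil_iff] at h0
        exact hne h0.1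
      obtain ⟨hdA, hdV, heq⟩ := cat_decomp fs hne hVne hd
      have hmono := hW_mono fs hfs (fun γ hγ => (hA γ hγ).2) hdA hxm
      have hxc : hW fs A x ≤ m + hW fs A m + 2 := le_trans hmono.2 (by omega)
      have hIH := IHj (m + hW fs A m + 2) (hW fs A x) hdV hxc
      rw [Function.iterate_succ_apply]
      show (fun y => hW fs A y)^[j] (hW fs A x) ≤ _
      omega

end WormAux

/-- If `A ∈ 𝕎₁^{ω·2}` is a worm all of whose modalities are
`≥ 1` and `h_{⟨1⟩A}(n)` is defined, then `h_{⟨1⟩A}(n) > h_A^{(n)}(n)`, the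
`n`-fold iterate of `h_A` applied to `n`. -/
theorem hW_one_cons_gt_iterate (fs : Ordinal → ℕ → Ordinal)
    (hfs : ∀ k, fs Ordinal.omega0 k = (k : Ordinal))
    (A : List Ordinal) (hA : ∀ γ ∈ A, 1 ≤ γ ∧ γ < Ordinal.omega0 * 2)
    (n : ℕ) (h : Dies fs ((1 : Ordinal) :: A) n) :
    (fun x => hW fs A x)^[n] n < hW fs ((1 : Ordinal) :: A) n := by
  classical
  open WormAux in
  have hone : (1 : Ordinal) = Order.succ 0 := Ordinal.succ_zero.symm
  have hone0 : (1 : Ordinal) ≠ 0 := one_ne_zero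
  have honel : ¬ Order.IsSuccLimit (1 : Ordinal) := hone ▸ Order.not_isSuccLimit_succ 0
  have hpred1 : Ordinal.pred 1 = 0 := by rw [hone, Ordinal.pred_succ]
  by_cases hAe : A = []
  · subst hAe
    have h1 : stepDown fs [(1:Ordinal)] n ≠ [] := by
      rw [WormAux.stepDown_succ_cons fs hone0 honel, WormAux.flat_rep_succ]
      simp
    have hpos : 0 < hW fs [(1:Ordinal)] n := WormAux.hW_pos fs h h1
    cases n with
    | zero => simpa using hpos
    | succ k =>
        rw [Function.iterate_succ_apply']
        simpa [WormAux.hW_nil] using hpos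
  · have h1 : ∀ γ ∈ A, ¬ γ < 1 := fun γ hγ => not_lt.2 (hA γ hγ).1
    have hh : headW 1 A = A := WormAux.headW_of_forall h1
    have hr : remW 1 A = [] := WormAux.remW_of_forall h1
    have s1 : stepDown fs ((1:Ordinal) :: A) n
        = (0:Ordinal) :: (A ++ (List.replicate n ((0:Ordinal) :: A)).flatten) := by
      rw [WormAux.stepDown_succ_cons fs hone0 honel, hh, hr, hpred1, List.append_nil,
        WormAux.flat_rep_succ, List.cons_append]
    have hVne : A ++ (List.replicate n ((0:Ordinal) :: A)).flatten ≠ [] := by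
      intro h0
      rw [List.append_eq_nil_iff] at h0
      exact hAe h0.1
    have hd1 : Dies fs ((0:Ordinal)
        :: (A ++ (List.replicate n ((0:Ordinal) :: A)).flatten)) (n+1) := by
      have := (WormAux.dies_step fs).1 h
      rwa [s1] at this
    have hd2 : Dies fs (A ++ (List.replicate n ((0:Ordinal) :: A)).flatten) (n+2) := by
      have := (WormAux.dies_step fs).1 hd1
      rwa [WormAux.stepDown_zero_cons] at this
    have e1 : hW fs ((1:Ordinal) :: A) n
        = hW fs ((0:Ordinal) :: (A ++ (List.replicate n ((0:Ordinal) :: A)).flatten)) (n+1) + 1 := by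
      have := WormAux.hW_step fs (by rw [s1]; simp) h
      rwa [s1] at this
    have e2 : hW fs ((0:Ordinal) :: (A ++ (List.replicate n ((0:Ordinal) :: A)).flatten)) (n+1)
        = hW fs (A ++ (List.replicate n ((0:Ordinal) :: A)).flatten) (n+2) + 1 := by
      have := WormAux.hW_step fs (A := (0:Ordinal)
        :: (A ++ (List.replicate n ((0:Ordinal) :: A)).flatten)) (m := n+1)
        (by rw [WormAux.stepDown_zero_cons]; exact hVne) hd1
      rwa [WormAux.stepDown_zero_cons] at this
    have hcl := WormAux.claim fs hfs hAe hA n (n+2) n hd2 (by omega)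
    omega
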